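/- arXiv:2011.03639 — 7 statements merged into one kernel-verified Lean document; each statement's English description precedes it below -/
import Mathlib

section
/- Let x, y : V → [k] be labelings of a finite graph G=(V,E) with nonnegative edge weights w. For α ∈ [k] let x^α be the expansion of x towards y (x^α(u) = α if y(u) = α, else x^α(u) = x(u)). Let E_z denote the set of edges cut by labeling z. Then Σ_{α∈[k]} Σ_{(u,v) ∈ E_x \ E_{x^α}} w(u,v) ≥ Σ_{(u,v) ∈ E_x \ E_y} w(u,v). -/
open Finset

noncomputable def pottsEnergy {V : Type*} [Fintype V] {k : ℕ}
    (Edges : Finset (V × V)) (θ : V → Fin k → ℝ) (w : V × V → ℝ) (x : V → Fin k) : ℝ :=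
  ∑ u, θ u (x u) + ∑ e ∈ Edges, w e * (if x e.1 ≠ x e.2 then 1 else 0)

noncomputable def perturbW {V : Type*} {k : ℕ} (w : V × V → ℝ) (x : V → Fin k) :
    V × V → ℝ :=
  fun e => if x e.1 ≠ x e.2 then w e else 2 * w e

/-- `x` is an `α`-expansion of `x`. -/
def IsExpansion {V : Type*} {k : ℕ} (α : Fin k) (x x : V → Fin k) : Prop :=
  ∀ u, (x u = α → x u = α) ∧ (x u ≠ α → x u = x u)

/-- The expansion of `x` towards `y` with label `α`. -/
def expansionToward {V : Type*} {k : ℕ} [DecidableEq (Fin k)]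
    (x y : V → Fin k) (α : Fin k) : V → Fin k :=
  fun u => if y u = α then α else x u

/-- The set of edges cut by a labeling `z`. -/
def cutEdges {V : Type*} [DecidableEq V] {k : ℕ}
    (Edges : Finset (V × V)) (z : V → Fin k) : Finset (V × V) :=
  Edges.filter (fun e => z e.1 ≠ z e.2)


theorem stmt3 {V : Type*} [Fintype V] [DecidableEq V] {k : ℕ}
    (Edges : Finset (V × V)) (w : V × V → ℝ) (hw : ∀ e ∈ Edges, 0 ≤ w e)
    (x y : V → Fin k) :
    ∑ α : Fin k, ∑ e ∈ cutEdges Edges x \ cutEdges Edges (expansionToward x y α), w e ≥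
      ∑ e ∈ cutEdges Edges x \ cutEdges Edges y, w e := by
  set S := cutEdges Edges x \ cutEdges Edges y with hS
  have hpart : ∑ e ∈ S, w e = ∑ α : Fin k, ∑ e ∈ S.filter (fun e => y e.1 = α), w e := by
    rw [← Finset.sum_fiberwise S (fun e => y e.1) w]
  rw [ge_iff_le, hpart]
  apply Finset.sum_le_sum
  intro α _
  apply Finset.sum_le_sum_of_subset_of_nonneg
  · intro e he
    simp only [Finset.mem_filter, hS, Finset.mem_sdiff, cutEdges, Finset.mem_filter] at he ⊢
    obtain ⟨⟨⟨heE, hx⟩, hy⟩, hyα⟩ := he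
    refine ⟨⟨heE, hx⟩, ?_⟩
    intro hc
    obtain ⟨_, hy2⟩ := hc
    have hyeq : y e.1 = y e.2 := by
      by_contra h
      exact hy ⟨heE, h⟩
    apply hy2
    simp [expansionToward, hyα, ← hyeq]
  · intro e he _
    have : e ∈ Edges := by
      simp only [Finset.mem_sdiff, cutEdges, Finset.mem_filter] at he
      exact he.1.1
    exact hw e this
end

section
/- Let x, y : V → [k] be labelings of a finite graph G=(V,E) with nonnegative edge weights w, and for α ∈ [k] let x^α be the expansion of x towards y. Let E_z = {(u,v) ∈ E : z(u) ≠ z(v)}. Then Σ_{α∈[k]} Σ_{(u,v) ∈ E_{x^α} \ E_x} w(u,v) ≤ 2 · Σ_{(u,v) ∈ E_y \ E_x} w(u,v). -/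
open Finset

theorem stmt4 {V : Type*} [Fintype V] [DecidableEq V] {k : ℕ}
    (Edges : Finset (V × V)) (w : V × V → ℝ) (hw : ∀ e ∈ Edges, 0 ≤ w e)
    (x y : V → Fin k) :
    ∑ α : Fin k, ∑ e ∈ cutEdges Edges (expansionToward x y α) \ cutEdges Edges x, w e ≤
      2 * ∑ e ∈ cutEdges Edges y \ cutEdges Edges x, w e := by
  set T := cutEdges Edges y \ cutEdges Edges x with hT
  have hsub : ∀ α : Fin k,
      cutEdges Edges (expansionToward x y α) \ cutEdges Edges x ⊆
        T.filter (fun e => y e.1 = α ∨ y e.2 = α) := by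
    intro α e he
    simp only [Finset.mem_sdiff, cutEdges, Finset.mem_filter] at he
    obtain ⟨⟨hE, hcut⟩, hnc⟩ := he
    have hx : x e.1 = x e.2 := by
      by_contra h
      exact hnc ⟨hE, h⟩
    simp only [hT, Finset.mem_filter, Finset.mem_sdiff, cutEdges]
    by_cases h1 : y e.1 = α <;> by_cases h2 : y e.2 = α <;>
      simp_all [expansionToward] <;> tauto
  calc ∑ α : Fin k, ∑ e ∈ cutEdges Edges (expansionToward x y α) \ cutEdges Edges x, w e
      ≤ ∑ α : Fin k, ∑ e ∈ T.filter (fun e => y e.1 = α ∨ y e.2 = α), w e := by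
        refine Finset.sum_le_sum fun α _ => ?_
        refine Finset.sum_le_sum_of_subset_of_nonneg (hsub α) fun e heT _ => ?_
        exact hw e (Finset.mem_of_mem_filter e (Finset.mem_sdiff.mp
          (Finset.mem_filter.mp heT).1).1)
    _ = ∑ e ∈ T, ∑ α : Fin k, (if y e.1 = α ∨ y e.2 = α then w e else 0) := by
        simp_rw [Finset.sum_filter]
        exact Finset.sum_comm
    _ = ∑ e ∈ T, 2 * w e := by
        refine Finset.sum_congr rfl fun e heT => ?_
        have hy : y e.1 ≠ y e.2 :=
          (Finset.mem_filter.mp (Finset.mem_sdiff.mp heT).1).2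
        have hf : (Finset.univ.filter (fun α : Fin k => y e.1 = α ∨ y e.2 = α)) =
            {y e.1, y e.2} := by
          ext β; simp [eq_comm]
        rw [← Finset.sum_filter, hf, Finset.sum_pair hy]
        ring
    _ = 2 * ∑ e ∈ T, w e := by rw [Finset.mul_sum]
end

section
/- Let x, y : V → [k] be labelings of a finite graph G=(V,E) with nonnegative weights w and node costs θ_u. Define w^x(u,v) = w(u,v) if x(u)≠x(v), else 2·w(u,v), and for each α ∈ [k] let x^α be the expansion of x towards y. Then Σ_{α∈[k]} (E_w(x) − E_w(x^α)) ≥ E_{w^x}(x) − E_{w^x}(y), where E_w(z) = Σ_u θ_u(z(u)) + Σ_{uv∈E} w(u,v)·𝟙[z(u)≠z(v)]. Consequently, if E_{w^x}(y) < E_{w^x}(x), then some α-expansion x^α of x satisfies E_w(x^α) < E_w(x). -/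
open Finset

private lemma vanish {k : ℕ} (a b c d α : Fin k) (hc : α ≠ c) (hd : α ≠ d) :
    ((if a ≠ b then (1:ℝ) else 0) -
      (if (if c = α then α else a) ≠ (if d = α then α else b) then 1 else 0)) = 0 := by
  simp only [if_neg (show ¬ c = α from fun h => hc h.symm),
    if_neg (show ¬ d = α from fun h => hd h.symm), sub_self]

private lemma key {k : ℕ} (a b c d : Fin k) :
    (if a ≠ b then (1:ℝ) else 2) * ((if a ≠ b then (1:ℝ) else 0) - (if c ≠ d then 1 else 0))
      ≤ ∑ α : Fin k,
        ((if a ≠ b then (1:ℝ) else 0) -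
          (if (if c = α then α else a) ≠ (if d = α then α else b) then 1 else 0)) := by
  have hS : ∑ α : Fin k,
        ((if a ≠ b then (1:ℝ) else 0) -
          (if (if c = α then α else a) ≠ (if d = α then α else b) then 1 else 0))
      = ∑ α ∈ ({c, d} : Finset (Fin k)),
        ((if a ≠ b then (1:ℝ) else 0) -
          (if (if c = α then α else a) ≠ (if d = α then α else b) then 1 else 0)) := by
    rw [← Finset.sum_subset (Finset.subset_univ _)]
    intro α _ hα
    simp only [Finset.mem_insert, Finset.mem_singleton, not_or] at hα
    exact vanish a b c d α hα.1 hα.2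
  rw [hS]
  by_cases hcd : c = d
  · subst hcd
    rw [show ({c, c} : Finset (Fin k)) = {c} by simp, Finset.sum_singleton, if_pos rfl]
    by_cases hab : a = b <;> simp [hab]
  · rw [Finset.sum_pair hcd]
    rw [if_pos rfl, if_pos rfl, if_neg hcd, if_neg (fun h : d = c => hcd h.symm)]
    by_cases hab : a = b <;> simp only [hab, if_pos, if_neg, ne_eq, not_true_eq_false,
      not_false_eq_true, ite_true, ite_false] <;> split_ifs <;> norm_num

theorem stmt5 {V : Type*} [Fintype V] {k : ℕ}
    (Edges : Finset (V × V)) (θ : V → Fin k → ℝ) (w : V × V → ℝ)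
    (hw : ∀ e ∈ Edges, 0 ≤ w e) (x y : V → Fin k) :
    (∑ α : Fin k,
        (pottsEnergy Edges θ w x - pottsEnergy Edges θ w (expansionToward x y α)) ≥
      pottsEnergy Edges θ (perturbW w x) x - pottsEnergy Edges θ (perturbW w x) y) ∧
    (pottsEnergy Edges θ (perturbW w x) y < pottsEnergy Edges θ (perturbW w x) x →
      ∃ α : Fin k,
        pottsEnergy Edges θ w (expansionToward x y α) < pottsEnergy Edges θ w x) := by
  have main : ∑ α : Fin k,
        (pottsEnergy Edges θ w x - pottsEnergy Edges θ w (expansionToward x y α)) ≥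
      pottsEnergy Edges θ (perturbW w x) x - pottsEnergy Edges θ (perturbW w x) y := by
    unfold pottsEnergy perturbW expansionToward
    have hsplit : ∑ α : Fin k,
        ((∑ u, θ u (x u) + ∑ e ∈ Edges, w e * (if x e.1 ≠ x e.2 then 1 else 0)) -
         (∑ u, θ u (if y u = α then α else x u) +
          ∑ e ∈ Edges, w e * (if (if y e.1 = α then α else x e.1) ≠ (if y e.2 = α then α else x e.2) then 1 else 0)))
        = (∑ u, (θ u (x u) - θ u (y u))) +
          ∑ e ∈ Edges, ∑ α : Fin k,
            (w e * (if x e.1 ≠ x e.2 then 1 else 0) -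
             w e * (if (if y e.1 = α then α else x e.1) ≠ (if y e.2 = α then α else x e.2) then 1 else 0)) := by
      have h1 : ∀ α : Fin k,
          ((∑ u, θ u (x u) + ∑ e ∈ Edges, w e * (if x e.1 ≠ x e.2 then 1 else 0)) -
           (∑ u, θ u (if y u = α then α else x u) +
            ∑ e ∈ Edges, w e * (if (if y e.1 = α then α else x e.1) ≠ (if y e.2 = α then α else x e.2) then 1 else 0)))
          = (∑ u, (θ u (x u) - θ u (if y u = α then α else x u))) +
            ∑ e ∈ Edges,
              (w e * (if x e.1 ≠ x e.2 then 1 else 0) -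
               w e * (if (if y e.1 = α then α else x e.1) ≠ (if y e.2 = α then α else x e.2) then 1 else 0)) := by
        intro α
        rw [Finset.sum_sub_distrib, Finset.sum_sub_distrib]
        ring
      rw [Finset.sum_congr rfl (fun α _ => h1 α), Finset.sum_add_distrib]
      congr 1
      · rw [Finset.sum_comm]
        refine Finset.sum_congr rfl (fun u _ => ?_)
        have h2 : ∀ α : Fin k, (θ u (x u) - θ u (if y u = α then α else x u))
            = if y u = α then (θ u (x u) - θ u (y u)) else 0 := by
          intro α
          by_cases h : y u = α
          · simp [h]
          · simp [h]
        rw [Finset.sum_congr rfl (fun α _ => h2 α), Finset.sum_ite_eq]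
        simp
      · rw [Finset.sum_comm]
    rw [ge_iff_le, hsplit, show (∑ u, θ u (x u) + ∑ e ∈ Edges,
        (if x e.1 ≠ x e.2 then w e else 2 * w e) * (if x e.1 ≠ x e.2 then 1 else 0)) -
        (∑ u, θ u (y u) + ∑ e ∈ Edges,
        (if x e.1 ≠ x e.2 then w e else 2 * w e) * (if y e.1 ≠ y e.2 then 1 else 0))
        = (∑ u, (θ u (x u) - θ u (y u))) +
          ∑ e ∈ Edges, ((if x e.1 ≠ x e.2 then w e else 2 * w e) * (if x e.1 ≠ x e.2 then 1 else 0)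
            - (if x e.1 ≠ x e.2 then w e else 2 * w e) * (if y e.1 ≠ y e.2 then 1 else 0)) by
          rw [Finset.sum_sub_distrib, Finset.sum_sub_distrib]; ring]
    gcongr with e he
    have hfac : (if x e.1 ≠ x e.2 then w e else 2 * w e) * (if x e.1 ≠ x e.2 then (1:ℝ) else 0)
        - (if x e.1 ≠ x e.2 then w e else 2 * w e) * (if y e.1 ≠ y e.2 then 1 else 0)
        = w e * ((if x e.1 ≠ x e.2 then (1:ℝ) else 2) *
            ((if x e.1 ≠ x e.2 then (1:ℝ) else 0) - (if y e.1 ≠ y e.2 then 1 else 0))) := by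
      split_ifs <;> ring
    have hfac2 : ∑ α : Fin k,
        (w e * (if x e.1 ≠ x e.2 then (1:ℝ) else 0) -
         w e * (if (if y e.1 = α then α else x e.1) ≠ (if y e.2 = α then α else x e.2) then 1 else 0))
        = w e * ∑ α : Fin k,
          ((if x e.1 ≠ x e.2 then (1:ℝ) else 0) -
           (if (if y e.1 = α then α else x e.1) ≠ (if y e.2 = α then α else x e.2) then 1 else 0)) := by
      rw [Finset.mul_sum]
      exact Finset.sum_congr rfl (fun α _ => by ring)
    rw [hfac, hfac2]
    exact mul_le_mul_of_nonneg_left (key (x e.1) (x e.2) (y e.1) (y e.2)) (hw e he)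
  refine ⟨main, fun h => ?_⟩
  by_contra hc
  push_neg at hc
  have hsum : ∑ α : Fin k,
      (pottsEnergy Edges θ w x - pottsEnergy Edges θ w (expansionToward x y α)) ≤ 0 :=
    Finset.sum_nonpos fun α _ => sub_nonpos.mpr (hc α)
  linarith
end

section
/- Let x : V → [k] be a labeling and let x' : V → Δ_k assign to each vertex u a probability vector x'_u over [k] with x'_u(i) ≤ ε < 1/k for all i ≠ x(u). Apply the rounding: choose α ∈ [k] uniformly at random and r ∈ (0, 1/k) uniformly at random, independently; set x^α(u) = α if x'_u(α) > r and x^α(u) = x(u) otherwise. Then for every vertex u and every label i ∈ [k], ℙ[x^α(u) = i] = x'_u(i). -/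
open Finset MeasureTheory

/-- The joint law of the rounding randomness: a uniform label `α ∈ [k]` and an
independent uniform threshold `r ∈ (0, 1/k)`. -/
noncomputable def roundMeasure (k : ℕ) [NeZero k] : Measure (Fin k × ℝ) :=
  ((PMF.uniformOfFintype (Fin k)).toMeasure).prod
    ((k : ENNReal) • volume.restrict (Set.Ioo (0 : ℝ) (1 / k)))

/-- The label assigned to vertex `u` by the rounding with randomness `p = (α, r)`:
`α` if `xp_u(α) > r`, else `x(u)`. -/
noncomputable def roundLabel {V : Type*} {k : ℕ} (x : V → Fin k) (xp : V → Fin k → ℝ)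
    (p : Fin k × ℝ) (u : V) : Fin k :=
  if p.2 < xp u p.1 then p.1 else x u


/-- Rounding guarantee: each vertex gets label `i` with probability exactly `x'_u(i)`. -/
theorem stmt8 {V : Type*} {k : ℕ} [NeZero k] (ε : ℝ) (hε : ε < 1 / k)
    (x : V → Fin k) (x' : V → Fin k → ℝ)
    (hnn : ∀ u i, 0 ≤ x' u i) (hsum : ∀ u, ∑ i, x' u i = 1)
    (hsmall : ∀ u i, i ≠ x u → x' u i ≤ ε)
    (u : V) (i : Fin k) :
    roundMeasure k {p : Fin k × ℝ | roundLabel x x' p u = i} =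
      ENNReal.ofReal (x' u i) := by
  classical
  have hkne : k ≠ 0 := NeZero.ne k
  have hkpos : (0:ℝ) < k := by exact_mod_cast Nat.pos_of_ne_zero hkne
  have hk0 : (k:ℝ) ≠ 0 := ne_of_gt hkpos
  have hkE0 : (k:ENNReal) ≠ 0 := by exact_mod_cast hkne
  have hkEtop : (k:ENNReal) ≠ ⊤ := ENNReal.natCast_ne_top k
  have hc_lt : ∀ α, α ≠ x u → x' u α < 1/k := fun α hα =>
    lt_of_le_of_lt (hsmall u α hα) hε
  set S : Fin k → Set ℝ := fun α =>
    (Set.Iio (x' u α) ∩ if α = i then Set.univ else (∅:Set ℝ)) ∪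
    (Set.Ici (x' u α) ∩ if x u = i then Set.univ else (∅:Set ℝ)) with hSdef
  have hSm : ∀ α, MeasurableSet (S α) := by
    intro α
    apply MeasurableSet.union
    · exact measurableSet_Iio.inter (by split_ifs <;> simp)
    · exact measurableSet_Ici.inter (by split_ifs <;> simp)
  have hmem : ∀ (α : Fin k) (r : ℝ), ((if r < x' u α then α else x u) = i ↔ r ∈ S α) := by
    intro α r
    by_cases hr : r < x' u α <;> by_cases h1 : α = i <;> by_cases h2 : x u = i <;>
      simp [hSdef, hr, h1, h2] <;> exact not_lt.mp hr
  have hset : {p : Fin k × ℝ | roundLabel x x' p u = i} = ⋃ α, {α} ×ˢ S α := by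
    ext ⟨α, r⟩
    simp only [Set.mem_setOf_eq, roundLabel, Set.mem_iUnion, Set.mem_prod,
      Set.mem_singleton_iff]
    rw [hmem α r]
    constructor
    · intro h; exact ⟨α, rfl, h⟩
    · rintro ⟨β, rfl, h⟩; exact h
  have hdisj : Pairwise (Function.onFun Disjoint fun α : Fin k => ({α} : Set (Fin k)) ×ˢ S α) := by
    intro a b hab
    simp only [Function.onFun]
    apply Set.disjoint_left.mpr
    rintro ⟨p1, p2⟩ ⟨h1, -⟩ ⟨h2, -⟩
    simp only [Set.mem_singleton_iff] at h1 h2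
    exact hab (h1.symm.trans h2)
  have hμ : ∀ α : Fin k, (PMF.uniformOfFintype (Fin k)).toMeasure {α} = (k:ENNReal)⁻¹ := by
    intro α
    rw [PMF.toMeasure_apply_singleton _ _ (measurableSet_singleton α),
      PMF.uniformOfFintype_apply]
    simp
  have hterm : ∀ α, ((k : ENNReal) • volume.restrict (Set.Ioo (0:ℝ) (1/k))) (S α)
      = (k:ENNReal) * volume (S α ∩ Set.Ioo 0 (1/k)) := by
    intro α
    rw [Measure.smul_apply, Measure.restrict_apply (hSm α), smul_eq_mul]
  rw [roundMeasure, hset,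
    measure_iUnion hdisj (fun α => (measurableSet_singleton α).prod (hSm α)),
    tsum_fintype]
  simp only [Measure.prod_prod, hμ, hterm]
  by_cases hxu : x u = i
  · -- case: target label is the base label
    have hSα : ∀ α, α ≠ i → S α = Set.Ici (x' u α) := by
      intro α hα; simp [hSdef, hα, hxu]
    have hSi : S i = Set.univ := by
      simp [hSdef, hxu, Set.Iio_union_Ici]
    have hvol : ∀ α, α ≠ i →
        volume (S α ∩ Set.Ioo 0 (1/(k:ℝ))) = ENNReal.ofReal (1/k - x' u α) := by
      intro α hα
      have hαx : α ≠ x u := fun h => hα (h.trans hxu)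
      rw [hSα α hα]
      rcases eq_or_lt_of_le (hnn u α) with h0 | h0
      · have : Set.Ici (x' u α) ∩ Set.Ioo 0 (1/(k:ℝ)) = Set.Ioo 0 (1/(k:ℝ)) := by
          rw [← h0]
          exact Set.inter_eq_right.mpr (fun r hr => le_of_lt hr.1)
        rw [this, Real.volume_Ioo, ← h0, sub_zero]
      · have : Set.Ici (x' u α) ∩ Set.Ioo 0 (1/(k:ℝ)) = Set.Ico (x' u α) (1/k) := by
          ext r
          constructor
          · rintro ⟨h1, _, h3⟩; exact ⟨h1, h3⟩
          · rintro ⟨h1, h2⟩; exact ⟨h1, lt_of_lt_of_le h0 h1, h2⟩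
        rw [this, Real.volume_Ico]
    have hvoli : volume (S i ∩ Set.Ioo 0 (1/(k:ℝ))) = ENNReal.ofReal (1/(k:ℝ)) := by
      rw [hSi, Set.univ_inter, Real.volume_Ioo, sub_zero]
    have hci : 1/(k:ℝ) ≤ x' u i := by
      have h1 : ∑ α ∈ univ.erase i, x' u α ≤ ∑ α ∈ univ.erase i, 1/(k:ℝ) :=
        Finset.sum_le_sum (fun α hα =>
          le_of_lt (hc_lt α (fun h => (Finset.mem_erase.mp hα).1 (h.trans hxu))))
      have hcard : (univ.erase i).card = k - 1 := by
        rw [Finset.card_erase_of_mem (mem_univ i), card_univ, Fintype.card_fin]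
      have h2 : ∑ α ∈ univ.erase i, (1:ℝ)/(k:ℝ) = ((k:ℝ) - 1) * (1/k) := by
        rw [Finset.sum_const, hcard, nsmul_eq_mul,
          Nat.cast_sub (Nat.one_le_iff_ne_zero.mpr hkne), Nat.cast_one]
      have h3 : x' u i = 1 - ∑ α ∈ univ.erase i, x' u α := by
        have := hsum u
        rw [← Finset.add_sum_erase _ _ (mem_univ i)] at this
        linarith
      have h4 : ((k:ℝ) - 1) * (1/k) = 1 - 1/k := by
        field_simp
      rw [h2, h4] at h1
      linarith [h1, h3.symm, h3]
    have hsum' : ∑ α ∈ univ.erase i, (1/(k:ℝ) - x' u α) = x' u i - 1/k := by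
      rw [Finset.sum_erase_eq_sub (mem_univ i), Finset.sum_sub_distrib, hsum u,
        Finset.sum_const, card_univ, Fintype.card_fin, nsmul_eq_mul, mul_one_div,
        div_self hk0]
      ring
    calc ∑ α, (k:ENNReal)⁻¹ * ((k:ENNReal) * volume (S α ∩ Set.Ioo 0 (1/(k:ℝ))))
        = ∑ α, volume (S α ∩ Set.Ioo 0 (1/(k:ℝ))) := by
          refine Finset.sum_congr rfl (fun α _ => ?_)
          rw [← mul_assoc, ENNReal.inv_mul_cancel hkE0 hkEtop, one_mul]
      _ = volume (S i ∩ Set.Ioo 0 (1/(k:ℝ)))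
            + ∑ α ∈ univ.erase i, volume (S α ∩ Set.Ioo 0 (1/(k:ℝ))) :=
          (Finset.add_sum_erase _ _ (mem_univ i)).symm
      _ = ENNReal.ofReal (1/(k:ℝ))
            + ∑ α ∈ univ.erase i, ENNReal.ofReal (1/(k:ℝ) - x' u α) := by
          rw [hvoli]
          congr 1
          exact Finset.sum_congr rfl (fun α hα => hvol α (Finset.mem_erase.mp hα).1)
      _ = ENNReal.ofReal (1/(k:ℝ)) + ENNReal.ofReal (x' u i - 1/k) := by
          rw [← ENNReal.ofReal_sum_of_nonneg (fun α hα =>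
            sub_nonneg.mpr (le_of_lt (hc_lt α
              (fun h => (Finset.mem_erase.mp hα).1 (h.trans hxu))))), hsum']
      _ = ENNReal.ofReal (x' u i) := by
          rw [← ENNReal.ofReal_add (by positivity) (sub_nonneg.mpr hci)]
          ring_nf
  · -- case: target label differs from the base label
    have hSi : S i = Set.Iio (x' u i) := by
      simp [hSdef, hxu]
    have hSα : ∀ α, α ≠ i → S α = ∅ := by
      intro α hα; simp [hSdef, hα, hxu]
    have hinter : Set.Iio (x' u i) ∩ Set.Ioo 0 (1/(k:ℝ)) = Set.Ioo 0 (x' u i) := by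
      have hlt : x' u i < 1/(k:ℝ) := hc_lt i (fun h => hxu h.symm)
      ext r
      constructor
      · rintro ⟨h1, h2, -⟩; exact ⟨h2, h1⟩
      · rintro ⟨h1, h2⟩; exact ⟨h2, h1, h2.trans hlt⟩
    rw [Finset.sum_eq_single i]
    · rw [hSi, hinter, Real.volume_Ioo, sub_zero, ← mul_assoc,
        ENNReal.inv_mul_cancel hkE0 hkEtop, one_mul]
    · intro α _ hα
      rw [hSα α hα, Set.empty_inter, measure_empty, mul_zero, mul_zero]
    · intro h; exact absurd (mem_univ i) h
end

section
/- Under the rounding of the previous statement (choose α ∈ [k] and r ∈ (0,1/k) uniformly and independently, set x^α(u)=α if x'_u(α) > r, else x^α(u)=x(u)), for any edge (u,v) with x(u) = x(v): ℙ[x^α(u) ≠ x^α(v)] ≤ Σ_{i≠x(u)} |x'_u(i) − x'_v(i)| ≤ 2·d(u,v), where d(u,v) = (1/2)·Σ_{i=1}^k |x'_u(i) − x'_v(i)|. -/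
open Finset MeasureTheory

/-- For an edge not cut by `x`, the rounding cuts it with probability at most
`∑_{i ≠ x(u)} |x'_u(i) − x'_v(i)| ≤ 2 d(u,v)`. -/
theorem stmt9 {V : Type*} {k : ℕ} [NeZero k] (ε : ℝ) (hε : ε < 1 / k)
    (x : V → Fin k) (x' : V → Fin k → ℝ)
    (hnn : ∀ u i, 0 ≤ x' u i) (hsum : ∀ u, ∑ i, x' u i = 1)
    (hsmall : ∀ u i, i ≠ x u → x' u i ≤ ε)
    (u v : V) (huv : x u = x v) :
    roundMeasure k {p : Fin k × ℝ | roundLabel x x' p u ≠ roundLabel x x' p v} ≤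
      ENNReal.ofReal (∑ i ∈ univ.filter (· ≠ x u), |x' u i - x' v i|) ∧
    (∑ i ∈ univ.filter (· ≠ x u), |x' u i - x' v i|) ≤
      2 * ((1 / 2) * ∑ i, |x' u i - x' v i|) := by
  have hkne : (k : ENNReal) ≠ 0 := by
    exact_mod_cast Nat.cast_ne_zero.mpr (NeZero.ne k)
  constructor
  · -- The bad event is contained in the union over labels α ≠ x u of
    -- {α} × [min (x' u α) (x' v α), max (x' u α) (x' v α))
    have hsub : {p : Fin k × ℝ | roundLabel x x' p u ≠ roundLabel x x' p v} ⊆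
        ⋃ α ∈ univ.filter (· ≠ x u),
          ({α} : Set (Fin k)) ×ˢ
            Set.Ico (min (x' u α) (x' v α)) (max (x' u α) (x' v α)) := by
      rintro ⟨α, r⟩ hp
      simp only [Set.mem_setOf_eq, roundLabel] at hp
      have hαne : α ≠ x u := by
        intro h
        apply hp
        rcases lt_or_ge r (x' u α) with h1 | h1 <;>
          rcases lt_or_ge r (x' v α) with h2 | h2
        · rw [if_pos h1, if_pos h2]
        · rw [if_pos h1, if_neg (not_lt.mpr h2)]; rw [h, huv]
        · rw [if_neg (not_lt.mpr h1), if_pos h2, h]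
        · rw [if_neg (not_lt.mpr h1), if_neg (not_lt.mpr h2)]; exact huv
      have hmem : r ∈ Set.Ico (min (x' u α) (x' v α)) (max (x' u α) (x' v α)) := by
        rcases lt_or_ge r (x' u α) with h1 | h1 <;>
          rcases lt_or_ge r (x' v α) with h2 | h2
        · exact absurd (by rw [if_pos h1, if_pos h2]) hp
        · exact ⟨(min_le_right _ _).trans h2, lt_of_lt_of_le h1 (le_max_left _ _)⟩
        · exact ⟨(min_le_left _ _).trans h1, lt_of_lt_of_le h2 (le_max_right _ _)⟩
        · exact absurd (by rw [if_neg (not_lt.mpr h1), if_neg (not_lt.mpr h2)]; exact huv) hp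
      simp only [Set.mem_iUnion]
      exact ⟨α, by simp [hαne], by simpa using hmem⟩
    calc roundMeasure k {p : Fin k × ℝ | roundLabel x x' p u ≠ roundLabel x x' p v}
        ≤ roundMeasure k (⋃ α ∈ univ.filter (· ≠ x u),
            ({α} : Set (Fin k)) ×ˢ
              Set.Ico (min (x' u α) (x' v α)) (max (x' u α) (x' v α))) :=
          measure_mono hsub
      _ ≤ ∑ α ∈ univ.filter (· ≠ x u), roundMeasure k
            (({α} : Set (Fin k)) ×ˢ
              Set.Ico (min (x' u α) (x' v α)) (max (x' u α) (x' v α))) :=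
          measure_biUnion_finset_le _ _
      _ ≤ ∑ α ∈ univ.filter (· ≠ x u), ENNReal.ofReal |x' u α - x' v α| := by
          apply Finset.sum_le_sum
          intro α _
          rw [roundMeasure, Measure.prod_prod]
          have h1 : (PMF.uniformOfFintype (Fin k)).toMeasure {α} = (k : ENNReal)⁻¹ := by
            rw [PMF.toMeasure_apply_singleton _ _ (measurableSet_singleton α),
              PMF.uniformOfFintype_apply]
            simp
          rw [h1]
          have h2 : ((k : ENNReal) • volume.restrict (Set.Ioo (0 : ℝ) (1 / k)))
              (Set.Ico (min (x' u α) (x' v α)) (max (x' u α) (x' v α))) ≤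
              (k : ENNReal) * ENNReal.ofReal |x' u α - x' v α| := by
            simp only [Measure.smul_apply, smul_eq_mul]
            gcongr
            calc volume.restrict (Set.Ioo (0 : ℝ) (1 / k))
                  (Set.Ico (min (x' u α) (x' v α)) (max (x' u α) (x' v α)))
                ≤ volume (Set.Ico (min (x' u α) (x' v α)) (max (x' u α) (x' v α))) :=
                  Measure.restrict_apply_le _ _
              _ = ENNReal.ofReal (max (x' u α) (x' v α) - min (x' u α) (x' v α)) := by
                  rw [Real.volume_Ico]
              _ = ENNReal.ofReal |x' u α - x' v α| := by rw [max_sub_min_eq_abs, abs_sub_comm]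
          calc (k : ENNReal)⁻¹ * ((k : ENNReal) • volume.restrict (Set.Ioo (0 : ℝ) (1 / k)))
                (Set.Ico (min (x' u α) (x' v α)) (max (x' u α) (x' v α)))
              ≤ (k : ENNReal)⁻¹ * ((k : ENNReal) * ENNReal.ofReal |x' u α - x' v α|) := by
                gcongr
            _ = ENNReal.ofReal |x' u α - x' v α| := by
                rw [← mul_assoc, ENNReal.inv_mul_cancel hkne (by simp), one_mul]
      _ = ENNReal.ofReal (∑ i ∈ univ.filter (· ≠ x u), |x' u i - x' v i|) := by
          rw [ENNReal.ofReal_sum_of_nonneg (fun i _ => abs_nonneg _)]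
  · have h2 : 2 * ((1 / 2) * ∑ i, |x' u i - x' v i|) = ∑ i, |x' u i - x' v i| := by ring
    rw [h2]
    exact Finset.sum_le_sum_of_subset_of_nonneg (filter_subset _ _)
      (fun i _ _ => abs_nonneg _)
end

section
/- Let x be a labeling that is a global minimum of the Potts energy with perturbed weights w^x (where w^x(u,v) = w(u,v) if x(u)≠x(v), else 2·w(u,v)), and let x* be a global minimum of the Potts energy with original weights w. Then E_w(x) ≤ E_w(x*) + Σ_{(u,v)∈E} w(u,v)·𝟙[x*(u) ≠ x*(v)]; in particular, if all node costs and weights are nonnegative, E_w(x) ≤ 2·E_w(x*). -/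
open Finset

/-- A global minimum of the perturbed instance satisfies the 2-approximation bound. -/
theorem stmt13 {V : Type*} [Fintype V] {k : ℕ}
    (Edges : Finset (V × V)) (θ : V → Fin k → ℝ) (w : V × V → ℝ)
    (hθ : ∀ u i, 0 ≤ θ u i) (hw : ∀ e ∈ Edges, 0 ≤ w e)
    (x xstar : V → Fin k)
    (hx : ∀ y : V → Fin k,
      pottsEnergy Edges θ (perturbW w x) x ≤ pottsEnergy Edges θ (perturbW w x) y)
    (hxstar : ∀ y : V → Fin k, pottsEnergy Edges θ w xstar ≤ pottsEnergy Edges θ w y) :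
    pottsEnergy Edges θ w x ≤
      pottsEnergy Edges θ w xstar +
        ∑ e ∈ Edges, w e * (if xstar e.1 ≠ xstar e.2 then 1 else 0) ∧
    pottsEnergy Edges θ w x ≤ 2 * pottsEnergy Edges θ w xstar := by
  have heq : pottsEnergy Edges θ (perturbW w x) x = pottsEnergy Edges θ w x := by
    unfold pottsEnergy perturbW
    congr 1
    apply Finset.sum_congr rfl
    intro e _
    by_cases h : x e.1 ≠ x e.2 <;> simp [h]
  have hle : pottsEnergy Edges θ (perturbW w x) xstar ≤
      pottsEnergy Edges θ w xstar +
        ∑ e ∈ Edges, w e * (if xstar e.1 ≠ xstar e.2 then 1 else 0) := by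
    unfold pottsEnergy perturbW
    rw [add_assoc]
    gcongr with e he
    · rw [← Finset.sum_add_distrib]
      apply Finset.sum_le_sum
      intro e he
      by_cases h : x e.1 ≠ x e.2 <;> by_cases h2 : xstar e.1 ≠ xstar e.2 <;>
        simp [h, h2] <;> nlinarith [hw e he]
  have h1 : pottsEnergy Edges θ w x ≤
      pottsEnergy Edges θ w xstar +
        ∑ e ∈ Edges, w e * (if xstar e.1 ≠ xstar e.2 then 1 else 0) := by
    calc pottsEnergy Edges θ w x = pottsEnergy Edges θ (perturbW w x) x := heq.symm
      _ ≤ pottsEnergy Edges θ (perturbW w x) xstar := hx xstar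
      _ ≤ _ := hle
  refine ⟨h1, ?_⟩
  have h2 : ∑ e ∈ Edges, w e * (if xstar e.1 ≠ xstar e.2 then 1 else 0) ≤
      pottsEnergy Edges θ w xstar := by
    unfold pottsEnergy
    have : 0 ≤ ∑ u, θ u (xstar u) := Finset.sum_nonneg fun u _ => hθ u _
    linarith
  linarith
end

section
/- There exists a Potts model instance where the converse of the previous statement fails: a labeling x satisfying the 2-approximation bound E_w(x) ≤ E_w(x*) + Σ_{uv} w(u,v)·𝟙[x*(u)≠x*(v)] that is not a global minimum of the perturbed instance with weights w^x. Concretely: take V = {s,t}, one edge (s,t) with w = 1, k = 4 labels, 0 < ε < 1/2, node costs θ_s = (0, ε, M, M) and θ_t = (M, M, ε, 0) for sufficiently large M (e.g., M > 2). The labeling x = (s↦1, t↦2) has energy 1+2ε ≤ 2 = E_w(x*) + (cut cost of x*), where x* = (s↦0, t↦3) is the unique MAP solution with energy 1, yet x is not optimal for weights w^x = w. -/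
open Finset

/-- Two-node Potts instance: vertices `s = true`, `t = false`, one edge `(s,t)` of
weight `1`, four labels. -/
noncomputable def exEnergy (ε M : ℝ) (z : Bool → Fin 4) : ℝ :=
  (![0, ε, M, M] : Fin 4 → ℝ) (z true) + (![M, M, ε, 0] : Fin 4 → ℝ) (z false) +
    (if z true ≠ z false then 1 else 0)

/-- Counterexample to the converse of the 2-approximation bound: the labeling
`x = (s↦1, t↦2)` satisfies the 2-approximation bound relative to the unique MAP
solution `x* = (s↦0, t↦3)` of energy `1`, yet (since `x` cuts the only edge, so the
perturbed weights coincide with the original ones) `x` is not a global minimum of the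
perturbed instance. -/
theorem stmt14 (ε M : ℝ) (hε0 : 0 < ε) (hε : ε < 1 / 2) (hM : 2 < M) :
    let x : Bool → Fin 4 := fun b => if b then 1 else 2
    let xstar : Bool → Fin 4 := fun b => if b then 0 else 3
    -- x cuts the only edge, so the perturbed instance has the same energy function
    (x true ≠ x false) ∧
    -- x satisfies the 2-approximation bound E(x) ≤ E(x*) + cut cost of x*
    exEnergy ε M x = 1 + 2 * ε ∧
    exEnergy ε M x ≤ exEnergy ε M xstar + (if xstar true ≠ xstar false then 1 else 0) ∧
    -- x* is the unique MAP solution, with energy 1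
    exEnergy ε M xstar = 1 ∧
    (∀ z : Bool → Fin 4, z ≠ xstar → exEnergy ε M xstar < exEnergy ε M z) ∧
    -- x is not optimal in the perturbed instance (whose energy equals exEnergy)
    (∃ y : Bool → Fin 4, exEnergy ε M y < exEnergy ε M x) := by
  intro x xstar
  refine ⟨by decide, ?_, ?_, ?_, ?_, ?_⟩
  · simp [exEnergy, x]; ring
  · simp [exEnergy, x, xstar]; linarith
  · simp [exEnergy, xstar]
  · intro z hz
    have hzt : ∀ b, z b = (if b then z true else z false) := by
      intro b; cases b <;> rfl
    have hne : z true ≠ 0 ∨ z false ≠ 3 := by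
      by_contra h
      push_neg at h
      exact hz (funext fun b => by cases b <;> simp [h.1, h.2, xstar])
    have e1 : exEnergy ε M xstar = 1 := by simp [exEnergy, xstar]
    rw [e1]
    have key : ∀ a b : Fin 4, (a ≠ 0 ∨ b ≠ 3) →
        1 < (![0, ε, M, M] : Fin 4 → ℝ) a + (![M, M, ε, 0] : Fin 4 → ℝ) b +
          (if a ≠ b then 1 else 0) := by
      intro a b hab
      fin_cases a <;> fin_cases b <;> simp_all <;> norm_num <;> linarith
    have := key (z true) (z false) hne
    simpa [exEnergy] using this
  · refine ⟨xstar, ?_⟩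
    have : exEnergy ε M xstar = 1 := by simp [exEnergy, xstar]
    have hx : exEnergy ε M x = 1 + 2 * ε := by simp [exEnergy, x]; ring
    rw [this, hx]; linarith
end
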